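/- Weak duality for the design problem: let K ⊂ ℝⁿ be compact, and suppose y is the moment vector up to degree 2d of a positive measure μ on K satisfying Ay = b, and suppose (X, z) satisfy that the polynomial x ↦ (c - A^T z)^T v_{2d}(x) - v_d(x)^T X v_d(x) is nonnegative on K, with X, M_d(y) symmetric. Then c^T y - φ(M_d(y)) ≥ b^T z + φ*(X), where φ is concave with concave conjugate φ*. -/

import Mathlib

open MeasureTheory Matrix

noncomputable section

/-- multi-indices in `n` variables of total degree at most `d` -/
def Idx (n d : ℕ) := {α : Fin n → Fin (d+1) // ∑ i, (α i : ℕ) ≤ d}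

instance (n d : ℕ) : Fintype (Idx n d) := by unfold Idx; infer_instance
instance (n d : ℕ) : DecidableEq (Idx n d) := by unfold Idx; infer_instance

/-- vector of monomials of degree at most `d`, evaluated at `x` -/
def mono (n d : ℕ) (x : Fin n → ℝ) : Idx n d → ℝ := fun α => ∏ i, x i ^ (α.1 i : ℕ)

/-- moment matrix `M_d(μ) = ∫ v_d v_dᵀ dμ` of a measure `μ` -/
def momentMatrix (n d : ℕ) (μ : Measure (Fin n → ℝ)) : Matrix (Idx n d) (Idx n d) ℝ :=
  Matrix.of fun α β => ∫ x, mono n d x α * mono n d x β ∂μ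

/-- sum of two multi-indices of degree ≤ d, as a multi-index of degree ≤ 2d -/
def addIdx {n d : ℕ} (α β : Idx n d) : Idx n (2*d) :=
  ⟨fun i => ⟨(α.1 i : ℕ) + (β.1 i : ℕ), by have := (α.1 i).isLt; have := (β.1 i).isLt; omega⟩,
    by
      have hs : ∑ i, (((fun i => (⟨(α.1 i : ℕ) + (β.1 i : ℕ), by have := (α.1 i).isLt; have := (β.1 i).isLt; omega⟩ : Fin (2*d+1))) i : ℕ)) = (∑ i, (α.1 i : ℕ)) + ∑ i, (β.1 i : ℕ) := by
        simp [Finset.sum_add_distrib]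
      rw [hs]
      have := α.2; have := β.2; omega⟩

/-- moment matrix `M_d(y)` built linearly from a moment vector `y` of degree up to `2d` -/
def momentMatrixVec (n d : ℕ) (y : Idx n (2*d) → ℝ) : Matrix (Idx n d) (Idx n d) ℝ :=
  Matrix.of fun α β => y (addIdx α β)


lemma addIdx_comm {n d : ℕ} (α β : Idx n d) : addIdx α β = addIdx β α := by
  apply Subtype.ext; funext i; exact Fin.ext (Nat.add_comm _ _)

lemma mono_addIdx {n d : ℕ} (x : Fin n → ℝ) (α β : Idx n d) :
    mono n (2*d) x (addIdx α β) = mono n d x α * mono n d x β := by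
  unfold mono addIdx
  simp [pow_add, Finset.prod_mul_distrib]

/-- weak duality for the optimal design problem. -/
theorem weak_duality (n d m : ℕ) (K : Set (Fin n → ℝ)) (hK : IsCompact K)
    (μ : Measure (Fin n → ℝ)) (hμK : μ Kᶜ = 0)
    (hInt2 : ∀ γ : Idx n (2*d), Integrable (fun x => mono n (2*d) x γ) μ)
    (hInt : ∀ α β : Idx n d, Integrable (fun x => mono n d x α * mono n d x β) μ)
    (y : Idx n (2*d) → ℝ) (hy : ∀ γ, y γ = ∫ x, mono n (2*d) x γ ∂μ)
    (A : Matrix (Fin m) (Idx n (2*d)) ℝ) (b : Fin m → ℝ) (c : Idx n (2*d) → ℝ)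
    (hAy : A.mulVec y = b)
    (φ : Matrix (Idx n d) (Idx n d) ℝ → ℝ)
    (hconc : ∀ (Y₁ Y₂ : Matrix (Idx n d) (Idx n d) ℝ), Y₁.IsSymm → Y₂.IsSymm →
      ∀ t : ℝ, 0 ≤ t → t ≤ 1 →
        t * φ Y₁ + (1 - t) * φ Y₂ ≤ φ (t • Y₁ + (1 - t) • Y₂))
    (X : Matrix (Idx n d) (Idx n d) ℝ) (hX : X.IsSymm) (z : Fin m → ℝ)
    (hpos : ∀ x ∈ K, mono n d x ⬝ᵥ X.mulVec (mono n d x)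
      ≤ ∑ γ, (c γ - Aᵀ.mulVec z γ) * mono n (2*d) x γ)
    (hbdd : BddBelow {t : ℝ | ∃ Y : Matrix (Idx n d) (Idx n d) ℝ, Y.IsSymm ∧
      t = Matrix.trace (X * Y) - φ Y}) :
    b ⬝ᵥ z + sInf {t : ℝ | ∃ Y : Matrix (Idx n d) (Idx n d) ℝ, Y.IsSymm ∧
        t = Matrix.trace (X * Y) - φ Y}
      ≤ c ⬝ᵥ y - φ (momentMatrixVec n d y) := by
  set S := {t : ℝ | ∃ Y : Matrix (Idx n d) (Idx n d) ℝ, Y.IsSymm ∧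
      t = Matrix.trace (X * Y) - φ Y} with hS
  set M := momentMatrixVec n d y with hM
  have hMsymm : M.IsSymm := by
    ext α β
    simp [hM, momentMatrixVec, Matrix.transpose_apply, addIdx_comm]
  have h1 : sInf S ≤ Matrix.trace (X * M) - φ M := csInf_le hbdd ⟨M, hMsymm, rfl⟩
  have hK_ae : ∀ᵐ x ∂μ, x ∈ K := by
    rw [MeasureTheory.ae_iff]
    simpa [Set.compl_def] using hμK
  have hfeq : ∀ x, mono n d x ⬝ᵥ X.mulVec (mono n d x)
      = ∑ α, ∑ β, X α β * (mono n d x α * mono n d x β) := by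
    intro x
    simp only [dotProduct, Matrix.mulVec, Finset.mul_sum]
    apply Finset.sum_congr rfl; intro α _
    apply Finset.sum_congr rfl; intro β _
    ring
  have hf_int : Integrable (fun x => mono n d x ⬝ᵥ X.mulVec (mono n d x)) μ := by
    simp only [hfeq]
    exact integrable_finset_sum _ fun α _ =>
      integrable_finset_sum _ fun β _ => (hInt α β).const_mul _
  have hg_int : Integrable (fun x => ∑ γ, (c γ - Aᵀ.mulVec z γ) * mono n (2*d) x γ) μ :=
    integrable_finset_sum _ fun γ _ => (hInt2 γ).const_mul _
  have hle : ∫ x, mono n d x ⬝ᵥ X.mulVec (mono n d x) ∂μ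
      ≤ ∫ x, ∑ γ, (c γ - Aᵀ.mulVec z γ) * mono n (2*d) x γ ∂μ :=
    integral_mono_ae hf_int hg_int (hK_ae.mono fun x hx => hpos x hx)
  have htr : Matrix.trace (X * M) = ∫ x, mono n d x ⬝ᵥ X.mulVec (mono n d x) ∂μ := by
    simp only [hfeq]
    erw [integral_finset_sum _ fun α _ =>
      integrable_finset_sum _ fun β _ => (hInt α β).const_mul _]
    rw [Matrix.trace]
    apply Finset.sum_congr rfl; intro α _
    erw [integral_finset_sum _ fun β _ => (hInt α β).const_mul _]
    simp only [Matrix.diag, Matrix.mul_apply]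
    apply Finset.sum_congr rfl; intro β _
    rw [MeasureTheory.integral_const_mul]
    congr 1
    rw [hM]
    show y (addIdx β α) = _
    rw [hy, addIdx_comm]
    exact integral_congr_ae (Filter.Eventually.of_forall fun x => mono_addIdx x α β)
  have hcy : c ⬝ᵥ y - b ⬝ᵥ z = ∫ x, ∑ γ, (c γ - Aᵀ.mulVec z γ) * mono n (2*d) x γ ∂μ := by
    rw [integral_finset_sum _ fun γ _ => (hInt2 γ).const_mul _]
    have hbz : b ⬝ᵥ z = ∑ γ, Aᵀ.mulVec z γ * y γ := by
      rw [← hAy]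
      simp only [dotProduct, Matrix.mulVec, Matrix.transpose_apply, Finset.sum_mul,
        Finset.mul_sum]
      rw [Finset.sum_comm]
      apply Finset.sum_congr rfl; intro γ _
      apply Finset.sum_congr rfl; intro i _
      ring
    rw [hbz]
    simp only [dotProduct, ← Finset.sum_sub_distrib]
    apply Finset.sum_congr rfl; intro γ _
    rw [MeasureTheory.integral_const_mul, ← hy]
    ring
  linarith
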